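/- For ω-words: if K ⊆ Σ^∞ is prefix-closed and K ∩ Σ^ω is a safety language (closed in the Cantor topology) and K ∩ Σ* satisfies the forward diamond property with respect to an independence relation I, and K is trace-closed, then the corresponding trace language L (with Lin(L) = K) equals its prime closure, i.e., L is prime-closed. -/

import Mathlib

/-!
Abstract setting for real Mazurkiewicz traces: `T` is the set ℝ of real
traces with the prefix partial order, `P : Set T` is the set 𝒫 of prime
traces, `cone p` is `pℝ = {t : p ≤ t}`.
-/

namespace MzTrace

variable {T : Type} [PartialOrder T]

/-- `cone p` models `pℝ`, the set of traces having `p` as a prefix. -/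
def cone (p : T) : Set T := Set.Ici p

/-- A set of traces is prime-open (w.r.t. the set `P` of prime traces)
if it is a union `⋃ {pℝ : p ∈ U}` for some `U ⊆ P`. -/
def PrimeOpen (P : Set T) (L : Set T) : Prop := ∃ U ⊆ P, L = ⋃ p ∈ U, cone p

/-- A set is prime-closed if its complement is prime-open. -/
def PrimeClosed (P : Set T) (L : Set T) : Prop := PrimeOpen P Lᶜ

/-- The prime closure of `L`: the intersection of all prime-closed supersets. -/
def primeClosure (P : Set T) (L : Set T) : Set T := ⋂₀ {K | PrimeClosed P K ∧ L ⊆ K}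

/-- A set `C` of traces is coherent if it has a common upper bound (a trace
`t` with `C ⊆ pref(t)`). -/
def Coherent (C : Set T) : Prop := BddAbove C

/-- `primePref P L` is `𝒫(L)`, the set of prime prefixes of elements of `L`. -/
def primePref (P : Set T) (L : Set T) : Set T := {p ∈ P | ∃ t ∈ L, p ≤ t}

/-- `L` is locally monitorable: for every prime `s` there is a prime `t`
with `{s,t}` coherent (i.e. `s ≤ tℝ`) and `tℝ ⊆ L` or `tℝ ⊆ Lᶜ`. -/
def LocallyMonitorable (P : Set T) (L : Set T) : Prop :=
  ∀ s ∈ P, ∃ t ∈ P, Coherent {s, t} ∧ (cone t ⊆ L ∨ cone t ⊆ Lᶜ)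

end MzTrace

namespace MzTrace

variable {T : Type} [PartialOrder T] [OrderBot T]

/-- part of Propositions p:locsafety / p:folocsafety, direction
(2)/(3) ⇒ (1): if `K = Lin(L) ⊆ Σ^∞` is trace-closed and prefix-closed,
`K ∩ Σ^ω` is a safety language, and `K ∩ Σ*` satisfies the forward diamond
property, then the trace language `L` is prime-closed, i.e. `L = L̄`.

The word-level hypotheses on `K` are rendered on the (trace-closed) trace
language `L ⊆ ℝ`:
* `hdown`: prefix-closedness of `K`,
* `hjoin`: the forward diamond property — if two finite traces of `L` are
  coherent then their join is again in `L`,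
* `hsafety`: `K ∩ Σ^ω` is a safety (topologically closed) language — limits
  of increasing chains in `L` stay in `L`.

`FinT` is the set of finite traces; the remaining hypotheses are the basic
domain properties of real traces: primes are finite, finiteness is inherited
by prefixes, a finite trace has finitely many prime prefixes and is their
least upper bound, bounded pairs have joins, and every trace is the limit of
an increasing chain of its finite prefixes. -/
theorem primeClosed_of_safety_forwardDiamond (P FinT : Set T)
    (hPF : P ⊆ FinT)
    (hFdown : ∀ s t : T, s ≤ t → t ∈ FinT → s ∈ FinT)
    (hlubprimes : ∀ x : T, IsLUB {p ∈ P | p ≤ x} x)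
    (hfinprimes : ∀ x ∈ FinT, {p ∈ P | p ≤ x}.Finite)
    (hsup : ∀ s t x : T, s ≤ x → t ≤ x → ∃ y, IsLUB {s, t} y)
    (happrox : ∀ x : T, ∃ f : ℕ → T, Monotone f ∧ (∀ n, f n ∈ FinT ∧ f n ≤ x) ∧
        IsLUB (Set.range f) x)
    (L : Set T) (hne : L.Nonempty)
    (hdown : ∀ s t : T, s ≤ t → t ∈ L → s ∈ L)
    (hjoin : ∀ s ∈ L ∩ FinT, ∀ t ∈ L ∩ FinT, ∀ x : T, IsLUB {s, t} x → x ∈ L)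
    (hsafety : ∀ f : ℕ → T, Monotone f → (∀ n, f n ∈ L) →
        ∀ x : T, IsLUB (Set.range f) x → x ∈ L) :
    primeClosure P L = L := by
  -- ⊥ is finite and in L
  obtain ⟨t0, ht0⟩ := hne
  have hbotL : (⊥ : T) ∈ L := hdown ⊥ t0 bot_le ht0
  have hbotF : (⊥ : T) ∈ FinT := by
    obtain ⟨f, -, hf, -⟩ := happrox t0
    exact hFdown ⊥ (f 0) bot_le (hf 0).1
  -- joins of finite bounded subsets of L are in L
  have key : ∀ S : Set T, S.Finite → ∀ b ∈ FinT, S ⊆ L → (∀ s ∈ S, s ≤ b) →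
      ∃ z, IsLUB S z ∧ z ∈ L ∧ z ≤ b := by
    intro S hS
    induction S, hS using Set.Finite.induction_on with
    | empty =>
      intro b _ _ _
      exact ⟨⊥, isLUB_empty, hbotL, bot_le⟩
    | @insert a S' _ _ ih =>
      intro b hb hSL hSb
      obtain ⟨z, hz, hzL, hzb⟩ := ih b hb (fun s hs => hSL (Set.mem_insert_of_mem a hs))
        (fun s hs => hSb s (Set.mem_insert_of_mem a hs))
      have hab : a ≤ b := hSb a (Set.mem_insert a S')
      obtain ⟨y, hy⟩ := hsup a z b hab hzb
      have hay : a ≤ y := hy.1 (Set.mem_insert a {z})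
      have hzy : z ≤ y := hy.1 (Set.mem_insert_of_mem a rfl)
      have hyLUB : IsLUB (insert a S') y := by
        constructor
        · rintro s (rfl | hs)
          · exact hay
          · exact le_trans (hz.1 hs) hzy
        · intro w hw
          have haw : a ≤ w := hw (Set.mem_insert a S')
          have hzw : z ≤ w := hz.2 (fun s hs => hw (Set.mem_insert_of_mem a hs))
          exact hy.2 (by rintro s (rfl | rfl) <;> assumption)
      have hyb : y ≤ b := hy.2 (by rintro s (rfl | rfl) <;> assumption)
      have haF : a ∈ FinT := hFdown a b hab hb
      have hzF : z ∈ FinT := hFdown z b hzb hb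
      have hyL : y ∈ L := hjoin a ⟨hSL (Set.mem_insert a S'), haF⟩ z ⟨hzL, hzF⟩ y hy
      exact ⟨y, hyLUB, hyL, hyb⟩
  -- if all prime prefixes of x are in L, then x ∈ L
  have main : ∀ x : T, (∀ p ∈ P, p ≤ x → p ∈ L) → x ∈ L := by
    intro x hall
    have hfinL : ∀ y ∈ FinT, y ≤ x → y ∈ L := by
      intro y hyF hyx
      obtain ⟨z, hz, hzL, -⟩ := key {p ∈ P | p ≤ y} (hfinprimes y hyF) y hyF
        (fun p hp => hall p hp.1 (le_trans hp.2 hyx)) (fun p hp => hp.2)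
      have := hz.unique (hlubprimes y)
      exact this ▸ hzL
    obtain ⟨f, hmono, hf, hlub⟩ := happrox x
    exact hsafety f hmono (fun n => hfinL (f n) (hf n).1 (hf n).2) x hlub
  -- L is prime-closed
  have hLclosed : PrimeClosed P L := by
    refine ⟨{p ∈ P | p ∉ L}, fun p hp => hp.1, ?_⟩
    ext x
    simp only [Set.mem_compl_iff, Set.mem_iUnion, cone, Set.mem_Ici]
    constructor
    · intro hx
      by_contra hcon
      push_neg at hcon
      refine hx (main x (fun p hpP hpx => ?_))
      by_contra hpL
      exact hcon p ⟨hpP, hpL⟩ hpx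
    · rintro ⟨p, ⟨-, hpL⟩, hpx⟩ hxL
      exact hpL (hdown p x hpx hxL)
  refine subset_antisymm (Set.sInter_subset_of_mem ⟨hLclosed, subset_rfl⟩)
    (Set.subset_sInter fun K hK => hK.2)

end MzTrace
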